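/- arXiv:1211.5621 — 3 statements merged into one kernel-verified Lean document; each statement's English description precedes it below -/
import Mathlib

section
/- Let $G$ be a finite abelian group and $\k$ an algebraically closed field of characteristic 0. The antisymmetrization map $\underline{a}: Z^2(G,\k^{\bullet}) \to \mathrm{Alt}(G)$, defined by $\underline{a}(z)(a,b) = z(a,b)z(b,a)^{-1}$, is a group homomorphism whose kernel is exactly the group of 2-coboundaries $B^2(G,\k^{\bullet})$, and whose image is the group $\mathrm{Alt}(G)$ of alternating bimultiplicative functions $G \times G \to \k^{\bullet}$. -/
/-- normalized 2-cocycle condition (trivial action) with values in `kˣ` -/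
def IsCocycle2 {G k : Type*} [CommGroup G] [Field k] (z : G → G → kˣ) : Prop :=
  ∀ a b c, z a (b * c) * z b c = z (a * b) c * z a b

/-- 2-coboundary condition -/
def IsCoboundary2 {G k : Type*} [CommGroup G] [Field k] (z : G → G → kˣ) : Prop :=
  ∃ f : G → kˣ, ∀ a b, z a b = f a * f b * (f (a * b))⁻¹

/-- alternating bimultiplicative function -/
def IsAltForm {G k : Type*} [CommGroup G] [Field k] (β : G → G → kˣ) : Prop :=
  (∀ a b c, β (a * b) c = β a c * β b c) ∧
  (∀ a b c, β a (b * c) = β a b * β a c) ∧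
  (∀ a, β a a = 1)

/-- the antisymmetrization map -/
def antisym {G k : Type*} [CommGroup G] [Field k] (z : G → G → kˣ) : G → G → kˣ :=
  fun a b => z a b * (z b a)⁻¹

section Aux
variable {k : Type*} [Field k]

def Bimul {G : Type*} [CommGroup G] (z : G → G → kˣ) : Prop :=
  (∀ a b c, z (a * b) c = z a c * z b c) ∧ (∀ a b c, z a (b * c) = z a b * z a c)

theorem alt_skew {G : Type*} [CommGroup G] {β : G → G → kˣ} (h : IsAltForm β) (x y : G) :
    β x y * β y x = 1 := by
  have h1 : β (x * y) (x * y) = 1 := h.2.2 _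
  rw [h.1, h.2.1, h.2.1, h.2.2, h.2.2] at h1
  simpa using h1

variable (k) in
def PGood (G : Type*) [CommGroup G] : Prop :=
  ∀ β : G → G → kˣ, IsAltForm β → ∃ z : G → G → kˣ, Bimul z ∧ antisym z = β

theorem pgood_of_mulEquiv {G H : Type*} [CommGroup G] [CommGroup H] (e : G ≃* H)
    (h : PGood k H) : PGood k G := by
  intro β hβ
  obtain ⟨z, hzb, hza⟩ := h (fun x y => β (e.symm x) (e.symm y))
    ⟨fun a b c => by dsimp only; rw [map_mul]; exact hβ.1 _ _ _,
     fun a b c => by dsimp only; rw [map_mul]; exact hβ.2.1 _ _ _,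
     fun a => hβ.2.2 _⟩
  refine ⟨fun a b => z (e a) (e b),
    ⟨fun a b c => by dsimp only; rw [map_mul]; exact hzb.1 _ _ _,
     fun a b c => by dsimp only; rw [map_mul]; exact hzb.2 _ _ _⟩, ?_⟩
  funext a b
  have := congrFun (congrFun hza (e a)) (e b)
  simpa [antisym, e.symm_apply_apply] using this

theorem pgood_of_subsingleton {G : Type*} [CommGroup G] [Subsingleton G] : PGood k G := by
  intro β hβ
  refine ⟨fun _ _ => 1, ⟨fun _ _ _ => by simp, fun _ _ _ => by simp⟩, ?_⟩
  funext a b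
  rw [Subsingleton.elim b a]
  simp [antisym, hβ.2.2 a]

theorem pgood_zmod (n : ℕ) : PGood k (Multiplicative (ZMod n)) := by
  intro β hβ
  have hgen : ∀ x : Multiplicative (ZMod n), ∃ i : ℤ,
      (Multiplicative.ofAdd (1 : ZMod n)) ^ i = x := by
    intro x
    obtain ⟨i, hi⟩ := ZMod.intCast_surjective (n := n) x.toAdd
    exact ⟨i, by rw [← ofAdd_zsmul]; simp [zsmul_eq_mul, hi]⟩
  have hβ1 : ∀ x y, β x y = 1 := by
    intro x y
    obtain ⟨i, rfl⟩ := hgen x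
    obtain ⟨j, rfl⟩ := hgen y
    set g := Multiplicative.ofAdd (1 : ZMod n)
    have φ : ∀ y, β (g ^ i) y = (β g y) ^ i := fun y =>
      map_zpow (MonoidHom.mk' (fun a => β a y) (fun a b => hβ.1 a b y)) g i
    have ψ : β g (g ^ j) = (β g g) ^ j :=
      map_zpow (MonoidHom.mk' (fun b => β g b) (fun a b => hβ.2.1 g a b)) g j
    rw [φ, ψ, hβ.2.2, one_zpow, one_zpow]
  refine ⟨fun _ _ => 1, ⟨fun _ _ _ => by simp, fun _ _ _ => by simp⟩, ?_⟩
  funext a b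
  simp [antisym, hβ1 a b]

theorem pgood_prod {A B : Type*} [CommGroup A] [CommGroup B]
    (hA : PGood k A) (hB : PGood k B) : PGood k (A × B) := by
  intro β hβ
  have hsk := alt_skew hβ
  obtain ⟨zA, hzAb, hzAa⟩ := hA (fun a a' => β (a, 1) (a', 1))
    ⟨fun a b c => by dsimp only; rw [show ((a*b : A), (1:B)) = (a,(1:B)) * (b,1) by simp]; exact hβ.1 _ _ _,
     fun a b c => by dsimp only; rw [show ((b*c : A), (1:B)) = (b,(1:B)) * (c,1) by simp]; exact hβ.2.1 _ _ _,
     fun a => hβ.2.2 _⟩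
  obtain ⟨zB, hzBb, hzBa⟩ := hB (fun b b' => β (1, b) (1, b'))
    ⟨fun a b c => by dsimp only; rw [show ((1:A), (a*b : B)) = ((1:A),a) * (1,b) by simp]; exact hβ.1 _ _ _,
     fun a b c => by dsimp only; rw [show ((1:A), (b*c : B)) = ((1:A),b) * (1,c) by simp]; exact hβ.2.1 _ _ _,
     fun a => hβ.2.2 _⟩
  refine ⟨fun p q => zA p.1 q.1 * zB p.2 q.2 * β (p.1, 1) (1, q.2), ⟨?_, ?_⟩, ?_⟩
  · intro p q r
    have : ((p.1 * q.1 : A), (1:B)) = (p.1, (1:B)) * (q.1, 1) := by simp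
    simp only [Prod.fst_mul, Prod.snd_mul, hzAb.1, hzBb.1, this, hβ.1]
    rw [← Units.val_inj]; push_cast; ring
  · intro p q r
    have : ((1:A), (q.2 * r.2 : B)) = ((1:A), q.2) * (1, r.2) := by simp
    simp only [Prod.fst_mul, Prod.snd_mul, hzAb.2, hzBb.2, this, hβ.2.1]
    rw [← Units.val_inj]; push_cast; ring
  · funext p q
    have eA : zA p.1 q.1 * (zA q.1 p.1)⁻¹ = β (p.1, 1) (q.1, 1) :=
      congrFun (congrFun hzAa p.1) q.1
    have eB : zB p.2 q.2 * (zB q.2 p.2)⁻¹ = β (1, p.2) (1, q.2) :=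
      congrFun (congrFun hzBa p.2) q.2
    have eC : β (1, p.2) (q.1, 1) = (β (q.1, 1) (1, p.2))⁻¹ :=
      eq_inv_of_mul_eq_one_left (hsk _ _)
    have hexp : β p q = β (p.1, 1) (q.1, 1) * β (p.1, 1) (1, q.2) *
        (β (1, p.2) (q.1, 1) * β (1, p.2) (1, q.2)) := by
      conv_lhs => rw [show p = (p.1, (1:B)) * ((1:A), p.2) by simp,
        show q = (q.1, (1:B)) * ((1:A), q.2) by simp]
      rw [hβ.1, hβ.2.1, hβ.2.1]
    show zA p.1 q.1 * zB p.2 q.2 * β (p.1, 1) (1, q.2) *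
        (zA q.1 p.1 * zB q.2 p.2 * β (q.1, 1) (1, p.2))⁻¹ = β p q
    rw [hexp, ← eA, ← eB, eC]
    rw [← Units.val_inj]; push_cast [Units.val_inv_eq_inv_val]; field_simp


theorem Bimul.cocycle {G : Type*} [CommGroup G] {z : G → G → kˣ} (h : Bimul z) :
    IsCocycle2 z := by
  intro a b c
  rw [h.1, h.2]
  rw [← Units.val_inj]; push_cast; ring

theorem cocycle_antisym_bimul {G : Type*} [CommGroup G] {z : G → G → kˣ}
    (hz : IsCocycle2 z) : Bimul (antisym z) := by
  have hsk : ∀ x y, antisym z x y = (antisym z y x)⁻¹ := by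
    intro x y; unfold antisym
    rw [← Units.val_inj]; push_cast [Units.val_inv_eq_inv_val]; field_simp
  have key : ∀ a b c, antisym z (a * b) c = antisym z a c * antisym z b c := by
    intro a b c
    have h1 := hz a b c
    have h2 := hz c a b
    have h3 := hz a c b
    rw [mul_comm c a] at h2
    rw [mul_comm c b] at h3
    have e1 : z (a * b) c = z a (b * c) * z b c * (z a b)⁻¹ := eq_mul_inv_of_mul_eq h1.symm
    have e2 : z c (a * b) = z (a * c) b * z c a * (z a b)⁻¹ := eq_mul_inv_of_mul_eq h2
    have e3 : z (a * c) b = z a (b * c) * z c b * (z a c)⁻¹ := eq_mul_inv_of_mul_eq h3.symm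
    unfold antisym
    rw [e1, e2, e3]
    rw [← Units.val_inj]; push_cast [Units.val_inv_eq_inv_val]; field_simp
  refine ⟨key, fun a b c => ?_⟩
  rw [hsk a (b * c), key, hsk b a, hsk c a, mul_inv, inv_inv, inv_inv]

theorem cocycle_antisym_diag {G : Type*} [CommGroup G] {z : G → G → kˣ} (a : G) :
    antisym z a a = 1 := by
  simp [antisym]

theorem pgood_pi (ι : Type) [Finite ι] (H : ι → Type) [∀ i, CommGroup (H i)]
    (h : ∀ i, PGood k (H i)) : PGood k (∀ i, H i) := by
  classical
  revert H
  refine Finite.induction_empty_option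
    (P := fun γ => ∀ (H : γ → Type) [∀ i, CommGroup (H i)],
      (∀ i, PGood k (H i)) → PGood k (∀ i, H i)) ?_ ?_ ?_ ι
  · intro α β e ih H _ h
    have h1 := ih (fun a => H (e a)) (fun a => h (e a))
    refine pgood_of_mulEquiv ?_ h1
    exact { toEquiv := (Equiv.piCongrLeft H e).symm
            map_mul' := fun x y => by
              funext a
              simp [Equiv.piCongrLeft_symm_apply] }
  · intro H _ h
    exact pgood_of_subsingleton
  · intro α _ ih H _ h
    have h1 : PGood k ((H none) × ∀ a, H (some a)) :=
      pgood_prod (h none) (ih (fun a => H (some a)) (fun a => h (some a)))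
    refine pgood_of_mulEquiv ?_ h1
    exact { toFun := fun x => (x none, fun a => x (some a))
            invFun := fun p i => Option.rec p.1 p.2 i
            left_inv := fun x => by funext i; cases i <;> rfl
            right_inv := fun p => rfl
            map_mul' := fun x y => rfl }


theorem pgood_finite (G : Type*) [CommGroup G] [Finite G] : PGood k G := by
  obtain ⟨ι, _, n, _, ⟨e⟩⟩ := CommGroup.equiv_prod_multiplicative_zmod_of_finite G
  exact pgood_of_mulEquiv e (pgood_pi ι _ (fun i => pgood_zmod (n i)))

end Aux

section Ext
variable {G : Type*} [CommGroup G] {k : Type*} [Field k]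

/-- carrier of the central-extension group attached to a 2-cocycle -/
structure Ext2 (G k : Type*) [CommGroup G] [Field k] (z : G → G → kˣ) where
  fst : kˣ
  snd : G

theorem Ext2.ext' {z : G → G → kˣ} {x y : Ext2 G k z} (h1 : x.fst = y.fst)
    (h2 : x.snd = y.snd) : x = y := by cases x; cases y; cases h1; cases h2; rfl

/-- the (additively written) abelian group structure on `Ext2` attached to a
normalized symmetric 2-cocycle -/
def ext2AddCommGroup (z : G → G → kˣ) (hz : IsCocycle2 z)
    (hsym : ∀ a b, z a b = z b a) (hnorm : ∀ a, z 1 a = 1) :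
    AddCommGroup (Ext2 G k z) :=
  letI addi : Add (Ext2 G k z) :=
    ⟨fun x y => ⟨x.fst * y.fst * z x.snd y.snd, x.snd * y.snd⟩⟩
  letI zeroi : Zero (Ext2 G k z) := ⟨⟨1, 1⟩⟩
  letI negi : Neg (Ext2 G k z) := ⟨fun x => ⟨(x.fst * z x.snd x.snd⁻¹)⁻¹, x.snd⁻¹⟩⟩
  { add := (· + ·)
    zero := 0
    neg := Neg.neg
    nsmul := nsmulRec
    zsmul := zsmulRec
    add_assoc := fun x y w => by
      refine Ext2.ext' ?_ (mul_assoc _ _ _)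
      show x.fst * y.fst * z x.snd y.snd * w.fst * z (x.snd * y.snd) w.snd
        = x.fst * (y.fst * w.fst * z y.snd w.snd) * z x.snd (y.snd * w.snd)
      have h := hz x.snd y.snd w.snd
      rw [← Units.val_inj] at h ⊢
      push_cast at h ⊢
      linear_combination (x.fst.val * y.fst.val * w.fst.val) * h.symm
    zero_add := fun x => by
      refine Ext2.ext' ?_ (one_mul _)
      show 1 * x.fst * z 1 x.snd = x.fst
      rw [hnorm, one_mul, mul_one]
    add_zero := fun x => by
      refine Ext2.ext' ?_ (mul_one _)
      show x.fst * 1 * z x.snd 1 = x.fst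
      rw [hsym, hnorm, mul_one, mul_one]
    neg_add_cancel := fun x => by
      refine Ext2.ext' ?_ (inv_mul_cancel _)
      show (x.fst * z x.snd x.snd⁻¹)⁻¹ * x.fst * z x.snd⁻¹ x.snd = 1
      rw [hsym x.snd⁻¹ x.snd]
      rw [← Units.val_inj]
      push_cast [Units.val_inv_eq_inv_val]
      field_simp
    add_comm := fun x y => by
      refine Ext2.ext' ?_ (mul_comm _ _)
      show x.fst * y.fst * z x.snd y.snd = y.fst * x.fst * z y.snd x.snd
      rw [hsym x.snd y.snd, mul_comm x.fst y.fst] }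

theorem symm_cocycle_is_coboundary [IsAlgClosed k] (z : G → G → kˣ)
    (hz : IsCocycle2 z) (hsym : ∀ a b, z a b = z b a) : IsCoboundary2 z := by
  classical
  -- divisibility of kˣ
  haveI : RootableBy kˣ ℕ := rootableByOfPowLeftSurj kˣ ℕ <| by
    intro n hn x
    obtain ⟨y, hy⟩ := IsAlgClosed.exists_pow_nat_eq (x : k) (Nat.pos_of_ne_zero hn)
    have hy0 : y ≠ 0 := fun h => by
      simp [h, zero_pow hn] at hy
      exact x.ne_zero hy.symm
    exact ⟨Units.mk0 y hy0, by ext; push_cast; exact hy⟩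
  haveI : RootableBy kˣ ℤ := Group.rootableByIntOfRootableByNat kˣ
  haveI : DivisibleBy (Additive kˣ) ℤ :=
    { div := fun a n => Additive.ofMul (RootableBy.root a.toMul n)
      div_zero := fun a => congrArg Additive.ofMul (RootableBy.root_zero a.toMul)
      div_cancel := fun {n} a hn => congrArg Additive.ofMul (RootableBy.root_cancel a.toMul hn) }
  -- normalize the cocycle
  set u : kˣ := z 1 1 with hu
  have hone : ∀ a, z 1 a = u := by
    intro a
    have h := hz 1 1 a
    rw [one_mul, one_mul] at h
    exact mul_left_cancel h
  set w : G → G → kˣ := fun a b => u⁻¹ * z a b with hw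
  have hwz : IsCocycle2 w := by
    intro a b c
    have h := hz a b c
    show u⁻¹ * z a (b*c) * (u⁻¹ * z b c) = u⁻¹ * z (a*b) c * (u⁻¹ * z a b)
    rw [← Units.val_inj] at h ⊢
    push_cast [Units.val_inv_eq_inv_val] at h ⊢
    field_simp
    linear_combination h
  have hwsym : ∀ a b, w a b = w b a := fun a b => by
    show u⁻¹ * z a b = u⁻¹ * z b a; rw [hsym a b]
  have hwnorm : ∀ a, w 1 a = 1 := fun a => by
    show u⁻¹ * z 1 a = 1; rw [hone a, inv_mul_cancel]
  -- the extension group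
  letI : AddCommGroup (Ext2 G k w) := ext2AddCommGroup w hwz hwsym hwnorm
  have hadd : ∀ x y : Ext2 G k w,
      x + y = ⟨x.fst * y.fst * w x.snd y.snd, x.snd * y.snd⟩ := fun _ _ => rfl
  let i : Additive kˣ →+ Ext2 G k w :=
    AddMonoidHom.mk' (fun d => ⟨d.toMul, 1⟩) (by
      intro d e
      refine (Ext2.ext' ?_ ?_).symm
      · show (d.toMul : kˣ) * e.toMul * w 1 1 = (d + e).toMul
        rw [hwnorm 1, mul_one]; rfl
      · show (1 : G) * 1 = 1
        rw [one_mul])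
  have hi : Function.Injective i := by
    intro d e h
    have := congrArg Ext2.fst h
    exact Additive.toMul.injective this
  obtain ⟨h, hh⟩ := (Module.Baer.of_divisible (Additive kˣ)).extension_property_addMonoidHom
    i hi (AddMonoidHom.id (Additive kˣ))
  -- extract the 1-cochain
  refine ⟨fun a => u * (h ⟨1, a⟩).toMul, fun a b => ?_⟩
  have key : (⟨1, a⟩ : Ext2 G k w) + ⟨1, b⟩ = i (Additive.ofMul (w a b)) + ⟨1, a * b⟩ := by
    rw [hadd, hadd]
    refine Ext2.ext' ?_ ?_
    · show (1 : kˣ) * 1 * w a b = (Additive.ofMul (w a b)).toMul * 1 * w 1 (a * b)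
      simp [hwnorm]
    · show a * b = 1 * (a * b)
      rw [one_mul]
  have key2 := congrArg h key
  have hi2 : ∀ x, h (i x) = x := fun x => by simpa using DFunLike.congr_fun hh x
  rw [map_add, map_add, hi2] at key2
  -- translate to multiplicative
  have key3 : (h ⟨1, a⟩).toMul * (h ⟨1, b⟩).toMul = w a b * (h ⟨1, a * b⟩).toMul := by
    have := congrArg Additive.toMul key2
    simpa using this
  have hwdef : z a b = u * w a b := by
    show z a b = u * (u⁻¹ * z a b); rw [← mul_assoc, mul_inv_cancel, one_mul]
  rw [hwdef]
  dsimp only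
  rw [eq_mul_inv_iff_mul_eq]
  rw [← Units.val_inj] at key3 ⊢
  push_cast at key3 ⊢
  linear_combination ((u : k) ^ 2) * key3.symm
end Ext


/-- for a finite abelian group `G` and `k` algebraically closed of
characteristic 0, antisymmetrization `Z²(G,kˣ) → Alt(G)` is a homomorphism with
kernel exactly `B²(G,kˣ)` and image exactly `Alt(G)`. -/
theorem stmt3 {G : Type*} [CommGroup G] [Fintype G]
    (k : Type*) [Field k] [IsAlgClosed k] [CharZero k] :
    (∀ z w : G → G → kˣ,
        antisym (fun a b => z a b * w a b) = fun a b => antisym z a b * antisym w a b) ∧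
    (∀ z : G → G → kˣ, IsCocycle2 z →
        ((antisym z = fun _ _ => 1) ↔ IsCoboundary2 z)) ∧
    (∀ β : G → G → kˣ,
        IsAltForm β ↔ ∃ z : G → G → kˣ, IsCocycle2 z ∧ antisym z = β) := by
  refine ⟨?_, ?_, ?_⟩
  · intro z w
    funext a b
    simp only [antisym]
    rw [← Units.val_inj]; push_cast [Units.val_inv_eq_inv_val]; field_simp; try ring
  · intro z hz
    constructor
    · intro h
      have hsym : ∀ a b, z a b = z b a := by
        intro a b
        have h1 := congrFun (congrFun h a) b
        simp only [antisym] at h1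
        exact mul_inv_eq_one.mp h1
      exact symm_cocycle_is_coboundary z hz hsym
    · rintro ⟨f, hf⟩
      funext a b
      show z a b * (z b a)⁻¹ = 1
      rw [hf, hf, mul_comm b a]
      rw [← Units.val_inj]; push_cast [Units.val_inv_eq_inv_val]; field_simp; try ring
  · intro β
    constructor
    · intro hβ
      obtain ⟨z, hzb, hza⟩ := pgood_finite G β hβ
      exact ⟨z, hzb.cocycle, hza⟩
    · rintro ⟨z, hzc, rfl⟩
      have hb := cocycle_antisym_bimul hzc
      exact ⟨hb.1, hb.2, fun a => cocycle_antisym_diag a⟩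
end

section
/- Let $p$ be a prime, $G$ a finite abelian $p$-group written multiplicatively with a $C_p$-action $\bullet$ by automorphisms, and let $\mathbb{G} = G \rtimes C_p$ be the corresponding semidirect product with $C_p = \langle t \rangle$. Then the lower central series of $\mathbb{G}$ satisfies $\gamma_r(\mathbb{G}) = (t-1)^{r-1} \bullet G$ for all $r \ge 2$, where $(t-1)^{r-1}\bullet G$ denotes the image of $G$ under the operator $(t-1)^{r-1} \in \mathbb{Z}C_p$. -/
open SemidirectProduct
open scoped commutatorElement

/-- for a finite abelian `p`-group `G` with a `C_p`-action `φ` and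
`𝔾 = G ⋊ C_p`, the lower central series satisfies `γ_r(𝔾) = (t-1)^{r-1} • G` for
`r ≥ 2`, where `(t-1) • g = (φ t g) * g⁻¹` and `(t-1)^{r-1} • G` is the image of the
`(r-1)`-fold iterate of this operator (note `γ_r` = `lowerCentralSeries _ (r-1)` in
Mathlib's indexing). -/
theorem stmt8 (p : ℕ) [Fact p.Prime] {G : Type*} [CommGroup G] [Fintype G]
    (hG : IsPGroup p G)
    (φ : Multiplicative (ZMod p) →* MulAut G)
    (d : G → G)
    (hd : ∀ g, d g = φ (Multiplicative.ofAdd 1) g * g⁻¹)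
    (r : ℕ) (hr : 2 ≤ r) :
    ∀ x : G ⋊[φ] Multiplicative (ZMod p),
      x ∈ Subgroup.lowerCentralSeries (⊤ : Subgroup (G ⋊[φ] Multiplicative (ZMod p))) (r - 1) ↔
        ∃ g : G, x = SemidirectProduct.inl (d^[r - 1] g) := by
  set t : Multiplicative (ZMod p) := Multiplicative.ofAdd 1 with ht
  -- d is a homomorphism
  have hdm : ∀ a b : G, d (a * b) = d a * d b := by
    intro a b
    simp only [hd, map_mul, mul_inv]
    simp [mul_comm, mul_left_comm, mul_assoc]
  have hd1 : d 1 = 1 := by simp [hd]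
  have hdinv : ∀ a : G, d a⁻¹ = (d a)⁻¹ := by
    intro a
    simp [hd, mul_comm]
  -- iterates are homomorphisms
  have hdn1 : ∀ n, d^[n] (1 : G) = 1 := by
    intro n; induction n with
    | zero => rfl
    | succ n ih => rw [Function.iterate_succ_apply', ih, hd1]
  have hdnm : ∀ n (a b : G), d^[n] (a * b) = d^[n] a * d^[n] b := by
    intro n; induction n with
    | zero => intro a b; rfl
    | succ n ih => intro a b; rw [Function.iterate_succ_apply', Function.iterate_succ_apply',
        Function.iterate_succ_apply', ih, hdm]
  have hdninv : ∀ n (a : G), d^[n] a⁻¹ = (d^[n] a)⁻¹ := by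
    intro n a
    have := hdnm n a a⁻¹
    rw [mul_inv_cancel, hdn1] at this
    exact (inv_eq_of_mul_eq_one_right this.symm).symm
  -- d commutes with the action
  have hφd : ∀ (u : Multiplicative (ZMod p)) (a : G), d (φ u a) = φ u (d a) := by
    intro u a
    have hcomm : φ t (φ u a) = φ u (φ t a) := by
      rw [← MulAut.mul_apply, ← MulAut.mul_apply, ← map_mul, ← map_mul, mul_comm]
    simp [hd, hcomm, map_mul]
  have hφdn : ∀ n (u : Multiplicative (ZMod p)) (a : G),
      d^[n] (φ u a) = φ u (d^[n] a) := by
    intro n; induction n with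
    | zero => intro u a; rfl
    | succ n ih => intro u a; rw [Function.iterate_succ_apply', Function.iterate_succ_apply',
        ih, hφd]
  -- key: (u - 1) • (d^[n] c) lies in the image of d^[n+1]
  have hkey : ∀ n (u : Multiplicative (ZMod p)) (c : G),
      ∃ e : G, φ u (d^[n] c) * (d^[n] c)⁻¹ = d^[n + 1] e := by
    intro n u c
    have hpow : ∀ k : ℕ, ∃ e : G, φ (t ^ k) (d^[n] c) * (d^[n] c)⁻¹ = d^[n + 1] e := by
      intro k; induction k with
      | zero => exact ⟨1, by simp [hdn1]⟩
      | succ k ih =>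
        obtain ⟨e, he⟩ := ih
        refine ⟨φ (t ^ k) c * e, ?_⟩
        have : φ (t ^ (k + 1)) (d^[n] c) * (d^[n] c)⁻¹
            = (φ t (φ (t ^ k) (d^[n] c)) * (φ (t ^ k) (d^[n] c))⁻¹)
              * (φ (t ^ k) (d^[n] c) * (d^[n] c)⁻¹) := by
          rw [pow_succ', map_mul, MulAut.mul_apply]
          simp [mul_assoc]
        rw [this, he, ← hd, ← hφdn, ← Function.iterate_succ_apply' d n, hdnm]
    have hu : u = t ^ (Multiplicative.toAdd u).val := by
      have : ((Multiplicative.toAdd u).val : ZMod p) = Multiplicative.toAdd u :=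
        ZMod.natCast_val _ |>.trans (ZMod.cast_id _ _)
      calc u = Multiplicative.ofAdd (Multiplicative.toAdd u) := rfl
        _ = Multiplicative.ofAdd (((Multiplicative.toAdd u).val : ℕ) • (1 : ZMod p)) := by
            rw [nsmul_eq_mul, mul_one, this]
        _ = t ^ (Multiplicative.toAdd u).val := by
            rw [ht, ← ofAdd_nsmul]
    rw [hu]; exact hpow _
  have hφφ : ∀ (v w : Multiplicative (ZMod p)) (z : G), φ v (φ w z) = φ (v * w) z := by
    intro v w z; rw [map_mul]; rfl
  have hφi : ∀ (v : Multiplicative (ZMod p)) (z : G), (φ v)⁻¹ z = φ v⁻¹ z := by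
    intro v z; rw [map_inv]
  -- general commutator formula
  have hcommE : ∀ x y : G ⋊[φ] Multiplicative (ZMod p),
      ⁅x, y⁆ = inl ((φ x.right y.left * y.left⁻¹) * (φ y.right x.left * x.left⁻¹)⁻¹) := by
    intro x y
    ext
    · simp only [commutatorElement_def, mul_left, inv_left, left_inl, mul_right, inv_right,
        hφi, hφφ]
      rw [show x.right * y.right * x.right⁻¹ = y.right from mul_inv_cancel_comm x.right y.right]
      rw [mul_inv_cancel]
      simp only [map_one, MulAut.one_apply]
      simp [mul_comm, mul_left_comm, mul_assoc, mul_inv, inv_inv]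
    · simp only [commutatorElement_def, mul_right, inv_right, right_inl]
      rw [mul_inv_cancel_comm, mul_inv_cancel]
  -- the commutator formula with inr t
  have hcomm1 : ∀ a : G, ⁅(inl a : G ⋊[φ] Multiplicative (ZMod p)), (inr t : G ⋊[φ] Multiplicative (ZMod p))⁆ = inl (d a)⁻¹ := by
    intro a
    ext
    · simp [commutatorElement_def, mul_left, inv_left, hd, mul_comm, mul_left_comm, mul_assoc]
    · simp [commutatorElement_def, mul_right, inv_right, mul_comm]
  have hlcs : ∀ n, Subgroup.lowerCentralSeries (⊤ : Subgroup (G ⋊[φ] Multiplicative (ZMod p))) (n + 1)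
      = ⁅Subgroup.lowerCentralSeries (⊤ : Subgroup (G ⋊[φ] Multiplicative (ZMod p))) n, (⊤ : Subgroup _)⁆ :=
    fun n => rfl
  -- main induction
  have main : ∀ k : ℕ, ∀ x : G ⋊[φ] Multiplicative (ZMod p),
      x ∈ Subgroup.lowerCentralSeries (⊤ : Subgroup (G ⋊[φ] Multiplicative (ZMod p))) (k + 1) ↔
        ∃ g : G, x = inl (d^[k + 1] g) := by
    intro k
    -- package target as a subgroup
    have hsub : ∀ n : ℕ, ∃ S : Subgroup (G ⋊[φ] Multiplicative (ZMod p)),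
        ∀ x, x ∈ S ↔ ∃ g : G, x = inl (d^[n] g) := by
      intro n
      refine ⟨MonoidHom.range (SemidirectProduct.inl.comp
        { toFun := d^[n], map_one' := hdn1 n, map_mul' := hdnm n : G →* G }), fun x => ?_⟩
      constructor
      · rintro ⟨g, rfl⟩; exact ⟨g, rfl⟩
      · rintro ⟨g, rfl⟩; exact ⟨g, rfl⟩
    induction k with
    | zero =>
      obtain ⟨S, hS⟩ := hsub 1
      have : Subgroup.lowerCentralSeries (⊤ : Subgroup (G ⋊[φ] Multiplicative (ZMod p))) 1 = S := by
        apply le_antisymm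
        · rw [lowerCentralSeries_one, commutator_def, Subgroup.commutator_le]
          intro x _ y _
          obtain ⟨e₁, he₁⟩ := hkey 0 x.right y.left
          obtain ⟨e₂, he₂⟩ := hkey 0 y.right x.left
          simp only [Function.iterate_one, Function.iterate_zero, id] at he₁ he₂ ⊢
          rw [hS]
          refine ⟨e₁ * e₂⁻¹, ?_⟩
          rw [hcommE, he₁, he₂, Function.iterate_one, ← hdinv, ← hdm]
        · intro x hx
          rw [hS] at hx
          obtain ⟨g, rfl⟩ := hx
          rw [lowerCentralSeries_one, commutator_def]
          have : (inl (d^[1] g) : G ⋊[φ] Multiplicative (ZMod p))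
              = ⁅(inl g⁻¹ : G ⋊[φ] Multiplicative (ZMod p)), (inr t : G ⋊[φ] Multiplicative (ZMod p))⁆ := by
            rw [hcomm1, hdinv]; simp
          rw [this]
          exact Subgroup.commutator_mem_commutator (Subgroup.mem_top _) (Subgroup.mem_top _)
      intro x; rw [this, hS]
    | succ k ih =>
      obtain ⟨S, hS⟩ := hsub (k + 2)
      obtain ⟨S', hS'⟩ := hsub (k + 1)
      have hprev : Subgroup.lowerCentralSeries (⊤ : Subgroup (G ⋊[φ] Multiplicative (ZMod p))) (k + 1) = S' := by
        ext x; rw [ih, hS']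
      have : Subgroup.lowerCentralSeries (⊤ : Subgroup (G ⋊[φ] Multiplicative (ZMod p))) (k + 2) = S := by
        apply le_antisymm
        · rw [hlcs, hprev, Subgroup.commutator_le]
          intro x hx y _
          rw [hS'] at hx
          obtain ⟨g, rfl⟩ := hx
          obtain ⟨e, he⟩ := hkey (k + 1) y.right g
          rw [hS]
          refine ⟨e⁻¹, ?_⟩
          rw [hcommE, hdninv]
          simp only [left_inl, right_inl, he, map_one, MulAut.one_apply, mul_inv_cancel,
            one_mul]
        · intro x hx
          rw [hS] at hx
          obtain ⟨g, rfl⟩ := hx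
          rw [hlcs, hprev]
          have : (inl (d^[k + 2] g) : G ⋊[φ] Multiplicative (ZMod p))
              = ⁅(inl ((d^[k + 1] g)⁻¹) : G ⋊[φ] Multiplicative (ZMod p)), (inr t : G ⋊[φ] Multiplicative (ZMod p))⁆ := by
            rw [hcomm1, hdinv, inv_inv, ← Function.iterate_succ_apply' d (k + 1)]
          rw [this]
          refine Subgroup.commutator_mem_commutator ?_ (Subgroup.mem_top _)
          rw [hS']
          exact ⟨g⁻¹, by rw [hdninv]⟩
      intro x; rw [this, hS]
  obtain ⟨k, rfl⟩ : ∃ k, r = k + 2 := ⟨r - 2, by omega⟩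
  simpa using main k
end

section
/- Let $G$ and $G'$ be finite $\mathbb{F}_p[C_p]$-modules with Krull–Schmidt decompositions $G \cong \bigoplus_l R_l^{m_l}$ and $G' \cong \bigoplus_l R_l^{m'_l}$ where $R_l = \mathbb{F}_p[C_p]/\langle(t-1)^l\rangle$. If the semidirect products $G \rtimes C_p$ and $G' \rtimes C_p$ are isomorphic as groups, then $m_l = m'_l$ for all $l$, and hence $G \cong G'$ as $C_p$-modules. -/
open Multiplicative SemidirectProduct
open scoped commutatorElement

namespace Stmt9Aux

variable {p : ℕ} {m : Fin p → ℕ}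

abbrev V (p : ℕ) (m : Fin p → ℕ) := ∀ l : Fin p, Fin (m l) → Fin ((l : ℕ) + 1) → ZMod p

def Pk (p : ℕ) (m : Fin p → ℕ) (k : ℕ) (v : V p m) : Prop :=
  ∀ (l : Fin p) (i : Fin (m l)) (j : Fin ((l : ℕ) + 1)), (l : ℕ) < (j : ℕ) + k → v l i j = 0

theorem Pk_add {k v w} (hv : Pk p m k v) (hw : Pk p m k w) : Pk p m k (v + w) := by
  intro l i j h
  show v l i j + w l i j = 0
  rw [hv l i j h, hw l i j h, add_zero]

theorem Pk_sub {k v w} (hv : Pk p m k v) (hw : Pk p m k w) : Pk p m k (v - w) := by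
  intro l i j h
  show v l i j - w l i j = 0
  rw [hv l i j h, hw l i j h, sub_zero]

theorem Pk_neg {k v} (hv : Pk p m k v) : Pk p m k (-v) := by
  intro l i j h
  show -(v l i j) = 0
  rw [hv l i j h, neg_zero]

theorem Pk_level_zero (v : V p m) : Pk p m 0 v := fun l i j hj => absurd j.isLt (by omega)

section T
variable {T : V p m → V p m}
  (hT : ∀ v l i j, T v l i j
      = v l i j + if h : (j : ℕ) + 1 < (l : ℕ) + 1 then v l i ⟨(j : ℕ) + 1, h⟩ else 0)
include hT

theorem Pk_T {k v} (hv : Pk p m k v) : Pk p m k (T v) := by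
  intro l i j hj
  rw [hT, hv l i j hj]
  split
  · rename_i h
    rw [hv l i ⟨(j : ℕ) + 1, h⟩ (by simp; omega), add_zero]
  · rw [add_zero]

theorem Pk_Tsub {k v} (hv : Pk p m k v) : Pk p m (k + 1) (T v - v) := by
  intro l i j hj
  show T v l i j - v l i j = 0
  rw [hT]
  split
  · rename_i h
    rw [hv l i ⟨(j : ℕ) + 1, h⟩ (by simp; omega)]
    ring
  · ring

theorem Pk_T_iter {k v} (hv : Pk p m k v) (n : ℕ) : Pk p m k (T^[n] v) := by
  induction n with
  | zero => simpa using hv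
  | succ n ih => rw [Function.iterate_succ_apply']; exact Pk_T hT ih

theorem Pk_iter_sub {k v} (hv : Pk p m k v) (n : ℕ) : Pk p m (k + 1) (T^[n] v - v) := by
  induction n with
  | zero =>
      simp only [Function.iterate_zero, id_eq, sub_self]
      intro l i j hj; rfl
  | succ n ih =>
      have h1 : T^[n + 1] v - v = (T (T^[n] v) - T^[n] v) + (T^[n] v - v) := by
        rw [Function.iterate_succ_apply']; abel
      rw [h1]
      exact Pk_add (Pk_Tsub hT (Pk_T_iter hT hv n)) ih

theorem Pk_surj {k w} (hw : Pk p m (k + 1) w) :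
    ∃ v, Pk p m k v ∧ T v - v = w := by
  refine ⟨fun l i j => if h : 0 < (j : ℕ) then w l i ⟨(j : ℕ) - 1, by omega⟩ else 0, ?_, ?_⟩
  · intro l i j hj
    dsimp only
    split
    · exact hw l i _ (by simp; omega)
    · rfl
  · funext l i j
    show T _ l i j - _ = w l i j
    rw [hT, add_sub_cancel_left]
    split
    · rename_i h
      rw [dif_pos (Nat.succ_pos _)]
      exact congrArg (w l i) (Fin.ext (by simp))
    · rename_i h
      exact (hw l i j (by have := j.isLt; omega)).symm

end T

theorem Pk_card (k : ℕ) :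
    Nat.card {v : V p m // Pk p m k v} = p ^ ∑ l : Fin p, m l * ((l : ℕ) + 1 - k) := by
  have eqv : {v : V p m // Pk p m k v} ≃ ∀ l : Fin p, Fin (m l) → Fin ((l : ℕ) + 1 - k) → ZMod p := by
    refine ⟨fun v l i j => v.1 l i (Fin.castLE (Nat.sub_le _ _) j),
      fun w => ⟨fun l i j => if h : (j : ℕ) < (l : ℕ) + 1 - k then w l i ⟨(j : ℕ), h⟩ else 0, ?_⟩,
      ?_, ?_⟩
    · intro l i j hj
      exact dif_neg (by omega)
    · rintro ⟨v, hv⟩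
      apply Subtype.ext
      funext l i j
      dsimp only
      split
      · rfl
      · rename_i h
        exact (hv l i j (by omega)).symm
    · intro w
      funext l i j
      dsimp only
      rw [dif_pos (by exact j.isLt)]
      exact congrArg (w l i) (Fin.ext rfl)
  rw [Nat.card_congr eqv, Nat.card_pi]
  have : ∀ l : Fin p, Nat.card (Fin (m l) → Fin ((l : ℕ) + 1 - k) → ZMod p)
      = p ^ (m l * ((l : ℕ) + 1 - k)) := by
    intro l
    rw [Nat.card_fun, Nat.card_fun, Nat.card_zmod, Nat.card_eq_fintype_card, Fintype.card_fin,
      Nat.card_eq_fintype_card, Fintype.card_fin, ← pow_mul, mul_comm]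
  rw [Finset.prod_congr rfl fun l _ => this l, Finset.prod_pow_eq_pow_sum]

theorem count_eq (m m' : Fin p → ℕ)
    (h : ∀ k : ℕ, ∑ l : Fin p, m l * ((l : ℕ) + 1 - k) = ∑ l : Fin p, m' l * ((l : ℕ) + 1 - k)) :
    m = m' := by
  have step : ∀ (m : Fin p → ℕ) (k : ℕ),
      ∑ l : Fin p, m l * ((l : ℕ) + 1 - k)
        = (∑ l : Fin p, m l * ((l : ℕ) + 1 - (k + 1)))
          + ∑ l : Fin p, (if k ≤ (l : ℕ) then m l else 0) := by
    intro m k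
    rw [← Finset.sum_add_distrib]
    refine Finset.sum_congr rfl fun l _ => ?_
    split <;> rename_i hkl
    · have h1 : (l : ℕ) + 1 - k = ((l : ℕ) + 1 - (k + 1)) + 1 := by omega
      rw [h1, Nat.mul_succ]
    · have h1 : (l : ℕ) + 1 - k = 0 := by omega
      have h2 : (l : ℕ) + 1 - (k + 1) = 0 := by omega
      simp [h1, h2]
  have hg : ∀ k : ℕ, ∑ l : Fin p, (if k ≤ (l : ℕ) then m l else 0)
      = ∑ l : Fin p, (if k ≤ (l : ℕ) then m' l else 0) := by
    intro k
    have h0 := h k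
    rw [step m k, step m' k, h (k + 1)] at h0
    omega
  have gstep : ∀ (m : Fin p → ℕ) (l : Fin p),
      ∑ l' : Fin p, (if (l : ℕ) ≤ (l' : ℕ) then m l' else 0)
        = m l + ∑ l' : Fin p, (if (l : ℕ) + 1 ≤ (l' : ℕ) then m l' else 0) := by
    intro m l
    have key : ∀ l' : Fin p, (if (l : ℕ) ≤ (l' : ℕ) then m l' else 0)
        = (if l = l' then m l' else 0) + (if (l : ℕ) + 1 ≤ (l' : ℕ) then m l' else 0) := by
      intro l'
      rcases eq_or_ne l l' with rfl | hne
      · simp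
      · have hv : (l : ℕ) ≠ (l' : ℕ) := fun hh => hne (Fin.ext hh)
        rw [if_neg hne]
        split <;> split <;> omega
    rw [Finset.sum_congr rfl fun l' _ => key l', Finset.sum_add_distrib, Finset.sum_ite_eq]
    simp
  funext l
  have h1 := hg (l : ℕ)
  have h2 := hg ((l : ℕ) + 1)
  rw [gstep m l, gstep m' l, h2] at h1
  omega

section Side

variable {p : ℕ} [Fact p.Prime] {G : Type*} [CommGroup G] [Fintype G]
  (φ : Multiplicative (ZMod p) →* MulAut G)
  {m : Fin p → ℕ}
  {T : V p m → V p m}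
  (e : G ≃* Multiplicative (V p m))

/-- the subgroup of `G` corresponding to `Pk` -/
def SG (k : ℕ) : Subgroup G where
  carrier := {g | Pk p m k (toAdd (e g))}
  one_mem' := by
    show Pk p m k (toAdd (e 1))
    rw [map_one]
    intro l i j h; rfl
  mul_mem' := by
    intro a b ha hb
    show Pk p m k (toAdd (e (a * b)))
    rw [map_mul, toAdd_mul]
    exact Pk_add ha hb
  inv_mem' := by
    intro a ha
    show Pk p m k (toAdd (e a⁻¹))
    rw [map_inv, toAdd_inv]
    exact Pk_neg ha

theorem mem_SG {k : ℕ} {g : G} : g ∈ SG e k ↔ Pk p m k (toAdd (e g)) := Iff.rfl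

section he
variable (he : ∀ g, e (φ (Multiplicative.ofAdd 1) g)
      = Multiplicative.ofAdd (T (Multiplicative.toAdd (e g))))
include he

theorem he_pow (n : ℕ) (g : G) :
    e (φ (ofAdd (1 : ZMod p) ^ n) g) = ofAdd (T^[n] (toAdd (e g))) := by
  induction n generalizing g with
  | zero => simp
  | succ n ih =>
      rw [pow_succ', map_mul, MulAut.mul_apply, he, ih, toAdd_ofAdd]
      exact congrArg ofAdd (Function.iterate_succ_apply' T n _).symm

theorem act_eq (x : Multiplicative (ZMod p)) (g : G) :
    e (φ x g) = ofAdd (T^[(toAdd x).val] (toAdd (e g))) := by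
  have hx : (ofAdd (1 : ZMod p)) ^ (toAdd x).val = x := by
    rw [← ofAdd_nsmul, nsmul_eq_mul, mul_one, ZMod.natCast_rightInverse (toAdd x), ofAdd_toAdd]
  nth_rewrite 1 [← hx]
  rw [he_pow φ e he]

end he

/-- general commutator formula in the semidirect product -/
theorem comm_formula (h₁ h₂ : G ⋊[φ] Multiplicative (ZMod p)) :
    ⁅h₁, h₂⁆ = inl (h₁.left * φ h₁.right h₂.left * φ h₂.right h₁.left⁻¹ * h₂.left⁻¹) := by
  ext
  · show (h₁ * h₂ * h₁⁻¹ * h₂⁻¹).left = _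
    rw [mul_left, mul_left, mul_left, inv_left, inv_left, mul_right, mul_right, inv_right,
      left_inl]
    rw [← MulAut.mul_apply, ← map_mul, ← MulAut.mul_apply, ← map_mul]
    simp only [mul_right]
    have c1 : h₁.right * h₂.right * h₁.right⁻¹ = h₂.right := by
      rw [mul_comm h₁.right h₂.right, mul_assoc, mul_inv_cancel, mul_one]
    rw [c1, mul_inv_cancel, map_one, MulAut.one_apply]
  · show (h₁ * h₂ * h₁⁻¹ * h₂⁻¹).right = (inl (h₁.left * φ h₁.right h₂.left * φ h₂.right h₁.left⁻¹ * h₂.left⁻¹) : G ⋊[φ] Multiplicative (ZMod p)).right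
    simp only [mul_right, inv_right, right_inl]
    rw [mul_comm h₁.right h₂.right, mul_assoc h₂.right, mul_inv_cancel, mul_one,
      mul_inv_cancel]

section main
variable (hT : ∀ v l i j, T v l i j
      = v l i j + if h : (j : ℕ) + 1 < (l : ℕ) + 1 then v l i ⟨(j : ℕ) + 1, h⟩ else 0)
  (he : ∀ g, e (φ (Multiplicative.ofAdd 1) g)
      = Multiplicative.ofAdd (T (Multiplicative.toAdd (e g))))
include hT he

theorem mem_SG_comm {k : ℕ} (a b : G) (x y : Multiplicative (ZMod p))
    (ha : Pk p m k (toAdd (e a))) (hb : Pk p m k (toAdd (e b))) :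
    (a * φ x b * φ y a⁻¹ * b⁻¹) ∈ SG e (k + 1) := by
  rw [mem_SG]
  have hrw : toAdd (e (a * φ x b * φ y a⁻¹ * b⁻¹))
      = (T^[(toAdd x).val] (toAdd (e b)) - toAdd (e b))
        - (T^[(toAdd y).val] (toAdd (e a)) - toAdd (e a)) := by
    simp only [map_mul, map_inv, act_eq φ e he, toAdd_mul, toAdd_inv, toAdd_ofAdd]
    abel
  rw [hrw]
  exact Pk_sub (Pk_iter_sub hT hb _) (Pk_iter_sub hT ha _)

theorem mem_SG_comm2 {k : ℕ} (b c : G) (y : Multiplicative (ZMod p))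
    (hb : Pk p m k (toAdd (e b))) :
    (b * φ 1 c * φ y b⁻¹ * c⁻¹) ∈ SG e (k + 1) := by
  rw [mem_SG]
  have hrw : toAdd (e (b * φ 1 c * φ y b⁻¹ * c⁻¹))
      = -(T^[(toAdd y).val] (toAdd (e b)) - toAdd (e b)) := by
    simp only [map_one, MulAut.one_apply, map_mul, map_inv, act_eq φ e he, toAdd_mul,
      toAdd_inv, toAdd_ofAdd]
    abel
  rw [hrw]
  exact Pk_neg (Pk_iter_sub hT hb _)

theorem key_elt (v : V p m) :
    φ (ofAdd 1) (e.symm (ofAdd v)) * (e.symm (ofAdd v))⁻¹ = e.symm (ofAdd (T v - v)) := by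
  apply e.injective
  rw [map_mul, map_inv, MulEquiv.apply_symm_apply, he, MulEquiv.apply_symm_apply, toAdd_ofAdd,
    MulEquiv.apply_symm_apply, ← div_eq_mul_inv, ← ofAdd_sub]

theorem comm_elt (v : V p m) :
    ⁅(inl (e.symm (ofAdd v)) : G ⋊[φ] Multiplicative (ZMod p)), (inr (ofAdd (1 : ZMod p)) : G ⋊[φ] Multiplicative (ZMod p))⁆
      = inl ((e.symm (ofAdd (T v - v)))⁻¹) := by
  rw [comm_formula]
  have h1 : (inl (e.symm (ofAdd v)) : G ⋊[φ] Multiplicative (ZMod p)).left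
      * φ (inl (e.symm (ofAdd v)) : G ⋊[φ] Multiplicative (ZMod p)).right
          (inr (ofAdd (1 : ZMod p)) : G ⋊[φ] Multiplicative (ZMod p)).left
      * φ (inr (ofAdd (1 : ZMod p)) : G ⋊[φ] Multiplicative (ZMod p)).right
          (inl (e.symm (ofAdd v)) : G ⋊[φ] Multiplicative (ZMod p)).left⁻¹
      * (inr (ofAdd (1 : ZMod p)) : G ⋊[φ] Multiplicative (ZMod p)).left⁻¹
      = (e.symm (ofAdd (T v - v)))⁻¹ := by
    simp only [left_inl, right_inl, left_inr, right_inr, map_one, MulAut.one_apply, inv_one,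
      mul_one, map_inv]
    rw [← key_elt φ e hT he v, mul_inv_rev, inv_inv, mul_comm]
  rw [h1]

theorem lcs_eq (k : ℕ) :
    (⊤ : Subgroup (G ⋊[φ] Multiplicative (ZMod p))).lowerCentralSeries (k + 1)
      = (SG e (k + 1)).map (inl (φ := φ)) := by
  induction k with
  | zero =>
      show ⁅(⊤ : Subgroup (G ⋊[φ] Multiplicative (ZMod p))), ⊤⁆ = _
      apply le_antisymm
      · rw [Subgroup.commutator_le]
        intro g₁ _ g₂ _
        rw [comm_formula]
        exact Subgroup.mem_map.mpr
          ⟨_, mem_SG_comm φ e hT he _ _ _ _ (Pk_level_zero _) (Pk_level_zero _), rfl⟩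
      · rintro x hx
        rw [Subgroup.mem_map] at hx
        obtain ⟨w, hw, rfl⟩ := hx
        obtain ⟨v, hv, hTv⟩ := Pk_surj hT hw
        have h2 : ⁅(inl (e.symm (ofAdd v)) : G ⋊[φ] Multiplicative (ZMod p)), (inr (ofAdd (1 : ZMod p)) : G ⋊[φ] Multiplicative (ZMod p))⁆⁻¹
            = inl w := by
          rw [comm_elt φ e hT he v, hTv, ofAdd_toAdd, MulEquiv.symm_apply_apply, ← map_inv,
            inv_inv]
        rw [← h2]
        exact inv_mem
          (Subgroup.commutator_mem_commutator (Subgroup.mem_top _) (Subgroup.mem_top _))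
  | succ k ih =>
      show ⁅(⊤ : Subgroup (G ⋊[φ] Multiplicative (ZMod p))).lowerCentralSeries (k + 1), ⊤⁆ = _
      rw [ih]
      apply le_antisymm
      · rw [Subgroup.commutator_le]
        rintro g₁ hg₁ g₂ _
        rw [Subgroup.mem_map] at hg₁
        obtain ⟨b, hb, rfl⟩ := hg₁
        rw [comm_formula]
        refine Subgroup.mem_map.mpr ⟨_, ?_, rfl⟩
        simp only [left_inl, right_inl]
        exact mem_SG_comm2 φ e hT he _ _ _ hb
      · rintro x hx
        rw [Subgroup.mem_map] at hx
        obtain ⟨w, hw, rfl⟩ := hx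
        obtain ⟨v, hv, hTv⟩ := Pk_surj hT hw
        have hgv : e.symm (ofAdd v) ∈ SG e (k + 1) := by
          rw [mem_SG, MulEquiv.apply_symm_apply, toAdd_ofAdd]
          exact hv
        have h2 : ⁅(inl (e.symm (ofAdd v)) : G ⋊[φ] Multiplicative (ZMod p)), (inr (ofAdd (1 : ZMod p)) : G ⋊[φ] Multiplicative (ZMod p))⁆⁻¹
            = inl w := by
          rw [comm_elt φ e hT he v, hTv, ofAdd_toAdd, MulEquiv.symm_apply_apply, ← map_inv,
            inv_inv]
        rw [← h2]
        exact inv_mem (Subgroup.commutator_mem_commutator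
          (Subgroup.mem_map.mpr ⟨_, hgv, rfl⟩) (Subgroup.mem_top _))

end main

theorem card_SG (k : ℕ) :
    Nat.card (SG e k) = p ^ ∑ l : Fin p, m l * ((l : ℕ) + 1 - k) := by
  rw [← Pk_card]
  refine Nat.card_congr ⟨fun g => ⟨toAdd (e g.1), g.2⟩,
    fun v => ⟨e.symm (ofAdd v.1), ?_⟩, fun g => ?_, fun v => ?_⟩
  · show Pk p m k (toAdd (e (e.symm (ofAdd v.1))))
    rw [MulEquiv.apply_symm_apply, toAdd_ofAdd]
    exact v.2
  · apply Subtype.ext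
    show e.symm (ofAdd (toAdd (e g.1))) = g.1
    rw [ofAdd_toAdd, MulEquiv.symm_apply_apply]
  · apply Subtype.ext
    show toAdd (e (e.symm (ofAdd v.1))) = v.1
    rw [MulEquiv.apply_symm_apply, toAdd_ofAdd]

theorem card_map_SG (k : ℕ) :
    Nat.card ((SG e k).map (inl (φ := φ))) = Nat.card (SG e k) :=
  (Nat.card_congr (Subgroup.equivMapOfInjective _ _ inl_injective).toEquiv).symm

include e in
theorem card_total :
    Nat.card (G ⋊[φ] Multiplicative (ZMod p)) = p ^ ((∑ l : Fin p, m l * ((l : ℕ) + 1)) + 1) := by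
  have e1 : (G ⋊[φ] Multiplicative (ZMod p)) ≃ G × Multiplicative (ZMod p) :=
    ⟨fun h => (h.left, h.right), fun g => ⟨g.1, g.2⟩, fun h => rfl, fun g => rfl⟩
  rw [Nat.card_congr e1, Nat.card_prod]
  have e3 : G ≃ {v : V p m // Pk p m 0 v} :=
    Equiv.trans (Equiv.trans (MulEquiv.toEquiv e) Multiplicative.toAdd)
      (Equiv.subtypeUnivEquiv Pk_level_zero).symm
  rw [Nat.card_congr e3, Pk_card, Nat.card_congr Multiplicative.toAdd, Nat.card_zmod, pow_succ]
  have h0 : ∑ l : Fin p, m l * ((l : ℕ) + 1 - 0) = ∑ l : Fin p, m l * ((l : ℕ) + 1) :=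
    Finset.sum_congr rfl fun l _ => by rw [Nat.sub_zero]
  rw [h0]

end Side

theorem card_lcs {H H' : Type*} [Group H] [Group H'] (f : H ≃* H') (n : ℕ) :
    Nat.card ((⊤ : Subgroup H).lowerCentralSeries n) = Nat.card ((⊤ : Subgroup H').lowerCentralSeries n) := by
  have h1 : ((⊤ : Subgroup H).lowerCentralSeries n).map f.toMonoidHom = (⊤ : Subgroup H').lowerCentralSeries n := by
    apply le_antisymm (Subgroup.lowerCentralSeries.map f.toMonoidHom n)
    intro x hx
    have h2 : f.symm x ∈ (⊤ : Subgroup H).lowerCentralSeries n :=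
      Subgroup.lowerCentralSeries.map f.symm.toMonoidHom n ⟨x, hx, rfl⟩
    exact ⟨f.symm x, h2, f.apply_symm_apply x⟩
  rw [← h1]
  exact Nat.card_congr
    (Subgroup.equivMapOfInjective ((⊤ : Subgroup H).lowerCentralSeries n) f.toMonoidHom f.injective).toEquiv

end Stmt9Aux

/-- let `G, G'` be finite `𝔽_p[C_p]`-modules (elementary abelian
`p`-groups with `C_p`-actions `φ, φ'`), with Krull–Schmidt decompositions
`G ≅ ⊕_l R_l^{m_l}` and `G' ≅ ⊕_l R_l^{m'_l}`, where `R_l` is modelled by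
`Fin l → ZMod p` with the generator `t` acting as a unipotent Jordan block `T`.
If `G ⋊ C_p ≅ G' ⋊ C_p` as groups then `m_l = m'_l` for all `l`, and hence
`G ≅ G'` as `C_p`-modules. -/
theorem stmt9 (p : ℕ) [Fact p.Prime]
    {G G' : Type*} [CommGroup G] [CommGroup G'] [Fintype G] [Fintype G']
    (φ : Multiplicative (ZMod p) →* MulAut G)
    (φ' : Multiplicative (ZMod p) →* MulAut G')
    (m m' : Fin p → ℕ)
    (T : (∀ l : Fin p, Fin (m l) → Fin ((l : ℕ) + 1) → ZMod p) →
         (∀ l : Fin p, Fin (m l) → Fin ((l : ℕ) + 1) → ZMod p))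
    (hT : ∀ v l i j, T v l i j
      = v l i j + if h : (j : ℕ) + 1 < (l : ℕ) + 1 then v l i ⟨(j : ℕ) + 1, h⟩ else 0)
    (T' : (∀ l : Fin p, Fin (m' l) → Fin ((l : ℕ) + 1) → ZMod p) →
          (∀ l : Fin p, Fin (m' l) → Fin ((l : ℕ) + 1) → ZMod p))
    (hT' : ∀ v l i j, T' v l i j
      = v l i j + if h : (j : ℕ) + 1 < (l : ℕ) + 1 then v l i ⟨(j : ℕ) + 1, h⟩ else 0)
    (e : G ≃* Multiplicative (∀ l : Fin p, Fin (m l) → Fin ((l : ℕ) + 1) → ZMod p))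
    (he : ∀ g, e (φ (Multiplicative.ofAdd 1) g)
      = Multiplicative.ofAdd (T (Multiplicative.toAdd (e g))))
    (e' : G' ≃* Multiplicative (∀ l : Fin p, Fin (m' l) → Fin ((l : ℕ) + 1) → ZMod p))
    (he' : ∀ g, e' (φ' (Multiplicative.ofAdd 1) g)
      = Multiplicative.ofAdd (T' (Multiplicative.toAdd (e' g))))
    (hiso : Nonempty ((G ⋊[φ] Multiplicative (ZMod p)) ≃* (G' ⋊[φ'] Multiplicative (ZMod p)))) :
    m = m' ∧ ∃ ψ : G ≃* G', ∀ (x : Multiplicative (ZMod p)) (g : G), ψ (φ x g) = φ' x (ψ g) := by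
  classical
  obtain ⟨f⟩ := hiso
  have hp2 : 2 ≤ p := (Fact.out : p.Prime).two_le
  have hm : m = m' := by
    apply Stmt9Aux.count_eq
    intro k
    match k with
    | 0 =>
        have h1 := Stmt9Aux.card_total φ e
        have h2 := Stmt9Aux.card_total φ' e'
        have h3 : Nat.card (G ⋊[φ] Multiplicative (ZMod p))
            = Nat.card (G' ⋊[φ'] Multiplicative (ZMod p)) := Nat.card_congr f.toEquiv
        rw [h1, h2] at h3
        have h4 := Nat.pow_right_injective hp2 h3
        have h5 : ∑ l : Fin p, m l * ((l : ℕ) + 1) = ∑ l : Fin p, m' l * ((l : ℕ) + 1) := by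
          omega
        simpa using h5
    | k + 1 =>
        have h1 := Stmt9Aux.lcs_eq φ e hT he k
        have h2 := Stmt9Aux.lcs_eq φ' e' hT' he' k
        have h3 := Stmt9Aux.card_lcs f (k + 1)
        rw [h1, h2, Stmt9Aux.card_map_SG, Stmt9Aux.card_map_SG,
          Stmt9Aux.card_SG, Stmt9Aux.card_SG] at h3
        exact Nat.pow_right_injective hp2 h3
  refine ⟨hm, ?_⟩
  subst hm
  have hTT : T' = T := by
    funext v l i j
    rw [hT, hT']
  refine ⟨e.trans e'.symm, ?_⟩
  have hgen : ∀ g : G, (e.trans e'.symm) (φ (Multiplicative.ofAdd 1) g)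
      = φ' (Multiplicative.ofAdd 1) ((e.trans e'.symm) g) := by
    intro g
    apply e'.injective
    show e' (e'.symm (e (φ (Multiplicative.ofAdd 1) g)))
      = e' (φ' (Multiplicative.ofAdd 1) (e'.symm (e g)))
    rw [MulEquiv.apply_symm_apply, he, he', MulEquiv.apply_symm_apply, hTT]
  have hpow : ∀ (n : ℕ) (g : G),
      (e.trans e'.symm) (φ ((Multiplicative.ofAdd (1 : ZMod p)) ^ n) g)
        = φ' ((Multiplicative.ofAdd (1 : ZMod p)) ^ n) ((e.trans e'.symm) g) := by
    intro n
    induction n with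
    | zero => intro g; simp
    | succ n ih =>
        intro g
        rw [pow_succ', map_mul, MulAut.mul_apply, hgen, ih, ← MulAut.mul_apply, ← map_mul,
          ← pow_succ']
  intro x g
  have hx : (Multiplicative.ofAdd (1 : ZMod p)) ^ (Multiplicative.toAdd x).val = x := by
    rw [← ofAdd_nsmul, nsmul_eq_mul, mul_one, ZMod.natCast_rightInverse (Multiplicative.toAdd x),
      ofAdd_toAdd]
  rw [← hx]
  exact hpow _ g
end
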